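/- arXiv:1406.5659 — 2 statements merged into one kernel-verified Lean document; each statement's English description precedes it below -/
import Mathlib

section
/- (Kronecker's theorem) Let K be a number field and P = [x_0 : ... : x_n] ∈ P^n(K) with x_{i_0} ≠ 0 for some fixed i_0. Then H(P) = 1 if and only if for every 0 ≤ j ≤ n the ratio x_j / x_{i_0} is zero or a root of unity. -/
open NumberField IsDedekindDomain

open Classical in
/-- The normalized absolute value of `x ∈ K` at a finite place `v` of the number field `K`,
namely `N(v)^(-ord_v x)`, so that together with the infinite places (weighted by their
local degrees) the product formula holds. -/
noncomputable def finAbs (K : Type*) [Field K] [NumberField K]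
    (v : HeightOneSpectrum (𝓞 K)) (x : K) : ℝ :=
  if h : x = 0 then 0
  else (Ideal.absNorm v.asIdeal : ℝ) ^
    (Multiplicative.toAdd (WithZero.unzero ((Valuation.ne_zero_iff _).mpr h :
      v.valuation K x ≠ 0)))

/-- The multiplicative height `H_K` of a tuple of homogeneous coordinates over a number
field `K`: the product over all places `v` of `K` of `max_j |x_j|_v^(n_v)`, where the
normalized absolute values satisfy the product formula (the local degree `n_v` is `mult v`
at an infinite place and is already accounted for by the normalization at finite places). -/
noncomputable def tupleHeight (K : Type*) [Field K] [NumberField K]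
    {iota : Type*} [Fintype iota] [Nonempty iota] (x : iota → K) : ℝ :=
  (∏ v : InfinitePlace K, (⨆ j, v (x j)) ^ v.mult) *
    ∏ᶠ v : HeightOneSpectrum (𝓞 K), ⨆ j, finAbs K v (x j)

/-- The absolute multiplicative height `H = H_K^(1/[K:ℚ])`. -/
noncomputable def absTupleHeight (K : Type*) [Field K] [NumberField K]
    {iota : Type*} [Fintype iota] [Nonempty iota] (x : iota → K) : ℝ :=
  tupleHeight K x ^ ((Module.finrank ℚ K : ℝ)⁻¹)

/- auxiliary lemmas -/
namespace KroneckerAux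

open Multiplicative WithZero Function IsDedekindDomain.HeightOneSpectrum

variable {K : Type*} [Field K] [NumberField K] (v : HeightOneSpectrum (𝓞 K))



lemma one_lt_absNorm : 1 < Ideal.absNorm v.asIdeal := by
  have h0 : 0 < Ideal.absNorm v.asIdeal := by
    rw [Ideal.absNorm_pos_iff_mem_nonZeroDivisors]
    exact mem_nonZeroDivisors_of_ne_zero v.ne_bot
  have h1 : Ideal.absNorm v.asIdeal ≠ 1 := by
    rw [Ne, Ideal.absNorm_eq_one_iff]
    exact v.isPrime.ne_top
  omega

lemma one_lt_absNormNN : (1 : NNReal) < (Ideal.absNorm v.asIdeal : NNReal) := by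
  exact_mod_cast one_lt_absNorm v

lemma absNormNN_ne_zero : (Ideal.absNorm v.asIdeal : NNReal) ≠ 0 :=
  ne_zero_of_lt (one_lt_absNormNN v)

lemma finAbs_eq_toNNReal (x : K) :
    finAbs K v x = (WithZeroMulInt.toNNReal (absNormNN_ne_zero v) (v.valuation K x) : ℝ) := by
  by_cases h : x = 0
  · simp [finAbs, h]
  · rw [finAbs, dif_neg h,
      WithZeroMulInt.toNNReal_neg_apply _ ((Valuation.ne_zero_iff _).mpr h)]
    push_cast
    rfl

lemma finAbs_nonneg (x : K) : 0 ≤ finAbs K v x := by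
  rw [finAbs_eq_toNNReal]; exact NNReal.coe_nonneg _

lemma finAbs_zero : finAbs K v (0 : K) = 0 := by simp [finAbs]

lemma finAbs_one : finAbs K v (1 : K) = 1 := by
  rw [finAbs_eq_toNNReal]; simp

lemma finAbs_mul (x y : K) : finAbs K v (x * y) = finAbs K v x * finAbs K v y := by
  simp_rw [finAbs_eq_toNNReal, ← NNReal.coe_mul, NNReal.coe_inj, map_mul]

lemma finAbs_pos {x : K} (hx : x ≠ 0) : 0 < finAbs K v x := by
  rw [finAbs_eq_toNNReal]
  exact_mod_cast WithZeroMulInt.toNNReal_pos _ ((Valuation.ne_zero_iff _).mpr hx)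

lemma finAbs_div (x y : K) : finAbs K v (x / y) = finAbs K v x / finAbs K v y := by
  rcases eq_or_ne y 0 with rfl | hy
  · simp [finAbs_zero]
  · have := finAbs_mul v (x / y) y
    rw [div_mul_cancel₀ _ hy] at this
    field_simp [this, (finAbs_pos v hy).ne']
    exact this.symm

lemma finAbs_eq_one_iff' (x : K) :
    finAbs K v x = 1 ↔ v.valuation K x = 1 := by
  rw [finAbs_eq_toNNReal]
  rw [show (1 : ℝ) = ((1 : NNReal) : ℝ) by norm_num, NNReal.coe_inj]
  exact WithZeroMulInt.toNNReal_eq_one_iff _ (absNormNN_ne_zero v)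
    (ne_of_gt (one_lt_absNormNN v))

lemma finAbs_le_one_iff (x : K) :
    finAbs K v x ≤ 1 ↔ v.valuation K x ≤ 1 := by
  rw [finAbs_eq_toNNReal]
  rw [show (1 : ℝ) = ((1 : NNReal) : ℝ) by norm_num, NNReal.coe_le_coe]
  exact WithZeroMulInt.toNNReal_le_one_iff (one_lt_absNormNN v)

open Classical in
/-- count of `v` in the factorization of the ideal generated by `a`. -/
noncomputable def cnt (a : 𝓞 K) : ℕ :=
  (Associates.mk v.asIdeal).count (Associates.mk (Ideal.span {a})).factors

lemma valuation_coe (a : 𝓞 K) {h : (a : K) ≠ 0} :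
    v.valuation K (a : K) = (ofAdd (-(cnt v a : ℤ)) : Multiplicative ℤ) := by
  have ha : a ≠ 0 := fun h' => h (by simp [h'])
  rw [show ((a : K)) = algebraMap (𝓞 K) K a from rfl, valuation_of_algebraMap,
    intValuation_apply, intValuationDef_if_neg _ ha]
  rfl

lemma toAdd_unzero_eq {m : ℤᵐ⁰} (h : m ≠ 0) (z : Multiplicative ℤ) (hm : m = (z : ℤᵐ⁰)) :
    toAdd (unzero h) = toAdd z := by
  subst hm
  rw [unzero_coe]

lemma finAbs_coe (a : 𝓞 K) (ha : a ≠ 0) :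
    finAbs K v (a : K) = ((Ideal.absNorm v.asIdeal : ℝ) ^ (cnt v a : ℤ))⁻¹ := by
  have h : (a : K) ≠ 0 := by
    simpa using ha
  rw [finAbs, dif_neg h, ← zpow_neg]
  congr 1
  rw [toAdd_unzero_eq _ (ofAdd (-(cnt v a : ℤ))) (valuation_coe v a (h := h))]
  simp

lemma valuation_coe_eq_one_iff (a : 𝓞 K) (ha : a ≠ 0) :
    v.valuation K (a : K) = 1 ↔ ¬ v.asIdeal ∣ Ideal.span {a} := by
  classical
  have h : (a : K) ≠ 0 := by simpa using ha
  have hspan : Ideal.span {a} ≠ (0 : Ideal (𝓞 K)) := by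
    simpa [Ideal.span_singleton_eq_bot] using ha
  rw [valuation_coe v a (h := h)]
  rw [← Associates.count_ne_zero_iff_dvd hspan (by apply v.irreducible)]
  constructor
  · intro hv
    have h2 : ofAdd (-(cnt v a : ℤ)) = (1 : Multiplicative ℤ) := by
      rwa [show (1 : ℤᵐ⁰) = ((1 : Multiplicative ℤ) : ℤᵐ⁰) from rfl, WithZero.coe_inj] at hv
    have h3 : (-(cnt v a : ℤ)) = 0 := by simpa using congrArg toAdd h2
    simp only [neg_eq_zero, Nat.cast_eq_zero] at h3
    exact fun hne => hne h3
  · intro hv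
    have h3 : cnt v a = 0 := not_ne_iff.mp hv
    simp [h3]

lemma mulSupport_finAbs_coe_finite {a : 𝓞 K} (ha : a ≠ 0) :
    (mulSupport fun v : HeightOneSpectrum (𝓞 K) => finAbs K v (a : K)).Finite := by
  apply Set.Finite.subset (Ideal.finite_factors (by simpa [Ideal.span_singleton_eq_bot] using ha :
    Ideal.span {a} ≠ 0))
  intro v hv
  simp only [mulSupport, Set.mem_setOf_eq] at hv ⊢
  by_contra hdvd
  exact hv ((finAbs_eq_one_iff' v _).mpr ((valuation_coe_eq_one_iff v a ha).mpr hdvd))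


lemma maxPowDividing_support {a : 𝓞 K} (ha : a ≠ 0) :
    (mulSupport fun v : HeightOneSpectrum (𝓞 K) =>
      v.maxPowDividing (Ideal.span {a})).Finite :=
  Ideal.finite_mulSupport
    (by simpa [Ideal.span_singleton_eq_bot] using ha)

lemma finprod_finAbs_coe {a : 𝓞 K} (ha : a ≠ 0) :
    ∏ᶠ v : HeightOneSpectrum (𝓞 K), finAbs K v (a : K) =
      ((Ideal.absNorm (Ideal.span {a}) : ℝ))⁻¹ := by
  classical
  have hspan : Ideal.span {a} ≠ (0 : Ideal (𝓞 K)) := by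
    simpa [Ideal.span_singleton_eq_bot] using ha
  set S : Finset (HeightOneSpectrum (𝓞 K)) := (Ideal.finite_factors hspan).toFinset with hS
  have hsub1 : (mulSupport fun v : HeightOneSpectrum (𝓞 K) => finAbs K v (a : K)) ⊆ ↑S := by
    intro v hv
    simp only [hS, Set.Finite.coe_toFinset]
    simp only [mulSupport, Set.mem_setOf_eq] at hv
    by_contra hdvd
    exact hv ((finAbs_eq_one_iff' v _).mpr ((valuation_coe_eq_one_iff v a ha).mpr hdvd))
  have hsub2 : (mulSupport fun v : HeightOneSpectrum (𝓞 K) =>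
      v.maxPowDividing (Ideal.span {a})) ⊆ ↑S := by
    intro v hv
    simp only [hS, Set.Finite.coe_toFinset]
    simp only [mulSupport, IsDedekindDomain.HeightOneSpectrum.maxPowDividing,
      Set.mem_setOf_eq] at hv
    by_contra hdvd
    apply hv
    rw [show (Associates.mk v.asIdeal).count (Associates.mk (Ideal.span {a})).factors = 0 from
      not_ne_iff.mp fun hc => hdvd ((Associates.count_ne_zero_iff_dvd hspan
        (by apply v.irreducible)).mp hc)]
    simp
  have hfact : Ideal.span {a} = ∏ v ∈ S, v.maxPowDividing (Ideal.span {a}) := by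
    rw [← finprod_eq_prod_of_mulSupport_subset _ hsub2]
    exact (Ideal.finprod_heightOneSpectrum_factorization hspan).symm
  have hnorm : (Ideal.absNorm (Ideal.span {a}) : ℝ) =
      ∏ v ∈ S, (Ideal.absNorm v.asIdeal : ℝ) ^ (cnt v a : ℤ) := by
    rw [hfact]
    push_cast [map_prod, IsDedekindDomain.HeightOneSpectrum.maxPowDividing, map_pow]
    rfl
  rw [finprod_eq_prod_of_mulSupport_subset _ hsub1, hnorm, ← Finset.prod_inv_distrib]
  exact Finset.prod_congr rfl fun v _ => finAbs_coe v a ha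

lemma prod_infinite_coe {a : 𝓞 K} (ha : a ≠ 0) :
    ∏ w : InfinitePlace K, w (a : K) ^ w.mult = (Ideal.absNorm (Ideal.span {a}) : ℝ) := by
  rw [InfinitePlace.prod_eq_abs_norm, Ideal.absNorm_span_singleton]
  rw [← Algebra.coe_norm_int, Nat.cast_natAbs]
  push_cast
  rfl

lemma total_coe {a : 𝓞 K} (ha : a ≠ 0) :
    (∏ w : InfinitePlace K, w (a : K) ^ w.mult) *
      ∏ᶠ v : HeightOneSpectrum (𝓞 K), finAbs K v (a : K) = 1 := by
  rw [prod_infinite_coe ha, finprod_finAbs_coe ha]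
  rw [mul_inv_cancel₀]
  have hspan : Ideal.span {a} ≠ (0 : Ideal (𝓞 K)) := by
    simpa [Ideal.span_singleton_eq_bot] using ha
  have := Ideal.absNorm_pos_iff_mem_nonZeroDivisors.mpr
    (mem_nonZeroDivisors_of_ne_zero hspan)
  positivity

lemma mulSupport_finAbs_finite {x : K} (hx : x ≠ 0) :
    (mulSupport fun v : HeightOneSpectrum (𝓞 K) => finAbs K v x).Finite := by
  obtain ⟨a, b, hb, rfl⟩ := IsFractionRing.div_surjective (A := 𝓞 K) x
  have hb0 : b ≠ 0 := nonZeroDivisors.ne_zero hb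
  have ha0 : a ≠ 0 := by
    rintro rfl
    simp at hx
  apply Set.Finite.subset ((mulSupport_finAbs_coe_finite ha0).union
    (mulSupport_finAbs_coe_finite hb0))
  intro v hv
  simp only [mulSupport, Set.mem_setOf_eq, Set.mem_union] at hv ⊢
  by_contra hc
  push_neg at hc
  rw [finAbs_div, hc.1, hc.2] at hv
  simp at hv

lemma product_formula {x : K} (hx : x ≠ 0) :
    (∏ w : InfinitePlace K, w x ^ w.mult) *
      ∏ᶠ v : HeightOneSpectrum (𝓞 K), finAbs K v x = 1 := by
  obtain ⟨a, b, hb, rfl⟩ := IsFractionRing.div_surjective (A := 𝓞 K) x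
  have hb0 : b ≠ 0 := nonZeroDivisors.ne_zero hb
  have ha0 : a ≠ 0 := by
    rintro rfl
    simp at hx
  have h1 : ∏ w : InfinitePlace K, w ((a : K) / (b : K)) ^ w.mult =
      (∏ w : InfinitePlace K, w (a : K) ^ w.mult) /
        ∏ w : InfinitePlace K, w (b : K) ^ w.mult := by
    rw [← Finset.prod_div_distrib]
    exact Finset.prod_congr rfl fun w _ => by rw [map_div₀, div_pow]
  have h2 : ∏ᶠ v : HeightOneSpectrum (𝓞 K), finAbs K v ((a : K) / (b : K)) =
      (∏ᶠ v : HeightOneSpectrum (𝓞 K), finAbs K v (a : K)) /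
        ∏ᶠ v : HeightOneSpectrum (𝓞 K), finAbs K v (b : K) := by
    rw [← finprod_div_distrib (mulSupport_finAbs_coe_finite ha0)
      (mulSupport_finAbs_coe_finite hb0)]
    exact finprod_congr fun v => finAbs_div v _ _
  rw [h1, h2, div_mul_div_comm, total_coe ha0, total_coe hb0, div_one]

lemma exists_int_of_valuation_le_one {x : K}
    (hx : ∀ v : HeightOneSpectrum (𝓞 K), v.valuation K x ≤ 1) :
    ∃ z : 𝓞 K, (z : K) = x := by
  classical
  obtain ⟨a, b, hb, rfl⟩ := IsFractionRing.div_surjective (A := 𝓞 K) x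
  have hb0 : b ≠ 0 := nonZeroDivisors.ne_zero hb
  have hbK : (b : K) ≠ 0 := by simpa using hb0
  by_cases ha0 : a = 0
  · exact ⟨0, by simp [ha0]⟩
  have haK : (a : K) ≠ 0 := by simpa using ha0
  have hA : Ideal.span {a} ≠ (0 : Ideal (𝓞 K)) := by
    simpa [Ideal.span_singleton_eq_bot] using ha0
  have hB : Ideal.span {b} ≠ (0 : Ideal (𝓞 K)) := by
    simpa [Ideal.span_singleton_eq_bot] using hb0
  have hcount : ∀ v : HeightOneSpectrum (𝓞 K), cnt v b ≤ cnt v a := by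
    intro v
    have h1 := hx v
    rw [map_div₀] at h1
    have h2 : v.valuation K (a : K) ≤ v.valuation K (b : K) := by
      have := mul_le_mul_left h1 (v.valuation K (b : K))
      rwa [div_mul_cancel₀ _ ((Valuation.ne_zero_iff _).mpr hbK), one_mul] at this
    rw [valuation_coe v a (h := haK), valuation_coe v b (h := hbK),
      WithZero.coe_le_coe, Multiplicative.ofAdd_le, neg_le_neg_iff, Nat.cast_le] at h2
    exact h2
  have hspan : Ideal.span {b} ∣ Ideal.span {a} := by
    rw [UniqueFactorizationMonoid.dvd_iff_normalizedFactors_le_normalizedFactors hB hA,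
      Multiset.le_iff_count]
    intro J
    by_cases hJ : Prime J
    · set v : HeightOneSpectrum (𝓞 K) :=
        ⟨J, Ideal.isPrime_of_prime hJ, hJ.ne_zero⟩ with hv
      have hJv : J = v.asIdeal := rfl
      have := hcount v
      rwa [cnt, cnt, count_associates_factors_eq hB v.isPrime v.ne_bot,
        count_associates_factors_eq hA v.isPrime v.ne_bot, ← hJv] at this
    · rw [Multiset.count_eq_zero_of_notMem
        (fun hmem => hJ (UniqueFactorizationMonoid.prime_of_normalized_factor _ hmem))]
      exact Nat.zero_le _
  obtain ⟨c, hc⟩ := Ideal.mem_span_singleton.mp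
    (Ideal.le_of_dvd hspan (Ideal.mem_span_singleton_self a))
  refine ⟨c, ?_⟩
  rw [hc]
  push_cast
  rw [mul_comm, mul_div_assoc, div_self hbK, mul_one]

lemma finAbs_pow (x : K) (k : ℕ) : finAbs K v (x ^ k) = finAbs K v x ^ k := by
  simp_rw [finAbs_eq_toNNReal, ← NNReal.coe_pow, NNReal.coe_inj, map_pow]

lemma pow_eq_one_imp {a : ℝ} (ha : 0 ≤ a) {k : ℕ} (hk : k ≠ 0) (h : a ^ k = 1) : a = 1 := by
  rcases lt_trichotomy a 1 with hlt | heq | hgt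
  · exact absurd h (by nlinarith [pow_lt_one₀ ha hlt hk])
  · exact heq
  · have h2 : a ≤ a ^ k := le_self_pow₀ hgt.le hk
    nlinarith

section prods

variable {ι : Type*}

lemma one_le_prod_real {s : Finset ι} {f : ι → ℝ} (h : ∀ i ∈ s, 1 ≤ f i) :
    1 ≤ ∏ i ∈ s, f i :=
  Finset.prod_induction f (1 ≤ ·) (fun a b ha hb => by nlinarith) le_rfl h

lemma prod_eq_one_forall {s : Finset ι} {f : ι → ℝ} (h : ∀ i ∈ s, 1 ≤ f i)
    (hp : ∏ i ∈ s, f i = 1) : ∀ i ∈ s, f i = 1 := by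
  classical
  intro i hi
  have h1 := Finset.mul_prod_erase s f hi
  have h2 : 1 ≤ ∏ j ∈ s.erase i, f j :=
    one_le_prod_real fun j hj => h j (Finset.mem_of_mem_erase hj)
  have h3 := h i hi
  nlinarith

lemma prod_le_one_real {s : Finset ι} {f : ι → ℝ} (h0 : ∀ i ∈ s, 0 ≤ f i)
    (h1 : ∀ i ∈ s, f i ≤ 1) : ∏ i ∈ s, f i ≤ 1 := by
  calc ∏ i ∈ s, f i ≤ ∏ i ∈ s, 1 := Finset.prod_le_prod h0 h1
  _ = 1 := Finset.prod_const_one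

lemma forall_eq_one_of_le_one {s : Finset ι} {f : ι → ℝ} (h0 : ∀ i ∈ s, 0 ≤ f i)
    (h1 : ∀ i ∈ s, f i ≤ 1) (hp : 1 ≤ ∏ i ∈ s, f i) : ∀ i ∈ s, f i = 1 := by
  classical
  intro i hi
  have hh1 := Finset.mul_prod_erase s f hi
  have h2 : ∏ j ∈ s.erase i, f j ≤ 1 :=
    prod_le_one_real (fun j hj => h0 j (Finset.mem_of_mem_erase hj))
      (fun j hj => h1 j (Finset.mem_of_mem_erase hj))
  have h3 : 0 ≤ ∏ j ∈ s.erase i, f j :=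
    Finset.prod_nonneg fun j hj => h0 j (Finset.mem_of_mem_erase hj)
  have h4 := h0 i hi
  have h5 := h1 i hi
  nlinarith

end prods

section sups

variable {ι : Type*} [Fintype ι] [Nonempty ι]

lemma le_iSup' (f : ι → ℝ) (i : ι) : f i ≤ ⨆ j, f j :=
  le_ciSup (Set.Finite.bddAbove (Set.finite_range f)) i

lemma iSup_eq_one_of (f : ι → ℝ) (i0 : ι) (h1 : f i0 = 1) (hle : ∀ i, f i ≤ 1) :
    ⨆ i, f i = 1 :=
  le_antisymm (ciSup_le hle) (h1 ▸ le_iSup' f i0)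

lemma mulSupport_sup_finite (y : ι → K) (i0 : ι) (hy : y i0 ≠ 0) :
    (mulSupport fun v : HeightOneSpectrum (𝓞 K) => ⨆ j, finAbs K v (y j)).Finite := by
  classical
  apply Set.Finite.subset (Set.Finite.biUnion (Set.toFinite {j : ι | y j ≠ 0})
    (fun j hj => mulSupport_finAbs_finite hj))
  intro v hv
  simp only [mulSupport, Set.mem_setOf_eq] at hv
  by_contra hmem
  simp only [Set.mem_iUnion, mulSupport, Set.mem_setOf_eq, not_exists] at hmem
  push_neg at hmem
  apply hv
  refine iSup_eq_one_of _ i0 (hmem i0 hy) fun j => ?_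
  rcases eq_or_ne (y j) 0 with hj | hj
  · rw [hj, finAbs_zero]; norm_num
  · rw [hmem j hj]

lemma tupleHeight_mul (c : K) (hc : c ≠ 0) (y : ι → K) (i0 : ι) (hy : y i0 ≠ 0) :
    tupleHeight K (fun j => c * y j) = tupleHeight K y := by
  have hinf : ∀ w : InfinitePlace K, (⨆ j, w (c * y j)) = w c * ⨆ j, w (y j) := by
    intro w
    simp_rw [map_mul]
    exact (Real.mul_iSup_of_nonneg (apply_nonneg w c) _).symm
  have hfin : ∀ v : HeightOneSpectrum (𝓞 K),
      (⨆ j, finAbs K v (c * y j)) = finAbs K v c * ⨆ j, finAbs K v (y j) := by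
    intro v
    simp_rw [finAbs_mul]
    exact (Real.mul_iSup_of_nonneg (finAbs_nonneg v c) _).symm
  unfold tupleHeight
  simp_rw [hinf, hfin, mul_pow]
  rw [Finset.prod_mul_distrib,
    finprod_mul_distrib (mulSupport_finAbs_finite hc) (mulSupport_sup_finite y i0 hy)]
  have := product_formula hc
  calc (∏ w : InfinitePlace K, w c ^ w.mult) * (∏ w : InfinitePlace K, (⨆ j, w (y j)) ^ w.mult) *
      ((∏ᶠ v : HeightOneSpectrum (𝓞 K), finAbs K v c) *
        ∏ᶠ v : HeightOneSpectrum (𝓞 K), ⨆ j, finAbs K v (y j))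
      = ((∏ w : InfinitePlace K, w c ^ w.mult) *
          ∏ᶠ v : HeightOneSpectrum (𝓞 K), finAbs K v c) *
        ((∏ w : InfinitePlace K, (⨆ j, w (y j)) ^ w.mult) *
          ∏ᶠ v : HeightOneSpectrum (𝓞 K), ⨆ j, finAbs K v (y j)) := by ring
  _ = tupleHeight K y := by rw [this, one_mul]; rfl

lemma one_le_sup_inf (y : ι → K) (i0 : ι) (hy : y i0 = 1) (w : InfinitePlace K) :
    1 ≤ ⨆ j, w (y j) := by
  have h1 : w (y i0) = 1 := by rw [hy, map_one]
  calc 1 = w (y i0) := h1.symm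
  _ ≤ ⨆ j, w (y j) := le_iSup' (fun j => w (y j)) i0

lemma one_le_sup_fin (y : ι → K) (i0 : ι) (hy : y i0 = 1) (v : HeightOneSpectrum (𝓞 K)) :
    1 ≤ ⨆ j, finAbs K v (y j) := by
  have h1 : finAbs K v (y i0) = 1 := by rw [hy, finAbs_one]
  calc 1 = finAbs K v (y i0) := h1.symm
  _ ≤ ⨆ j, finAbs K v (y j) := le_iSup' (fun j => finAbs K v (y j)) i0

lemma tupleHeight_eq_one_iff (y : ι → K) (i0 : ι) (hy : y i0 = 1) :
    tupleHeight K y = 1 ↔ (∀ w : InfinitePlace K, (⨆ j, w (y j)) = 1) ∧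
      (∀ v : HeightOneSpectrum (𝓞 K), (⨆ j, finAbs K v (y j)) = 1) := by
  classical
  have hy0 : y i0 ≠ 0 := by rw [hy]; exact one_ne_zero
  have hTfin := mulSupport_sup_finite y i0 hy0
  have hfp : ∏ᶠ v : HeightOneSpectrum (𝓞 K), ⨆ j, finAbs K v (y j) =
      ∏ v ∈ hTfin.toFinset, ⨆ j, finAbs K v (y j) :=
    finprod_eq_prod_of_mulSupport_subset _ (by simp)
  have hWm : ∀ w : InfinitePlace K, 1 ≤ (⨆ j, w (y j)) ^ w.mult :=
    fun w => one_le_pow₀ (one_le_sup_inf y i0 hy w)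
  constructor
  · intro hone
    unfold tupleHeight at hone
    rw [hfp] at hone
    have hA : 1 ≤ ∏ w : InfinitePlace K, (⨆ j, w (y j)) ^ w.mult :=
      one_le_prod_real fun w _ => hWm w
    have hB : 1 ≤ ∏ v ∈ hTfin.toFinset, ⨆ j, finAbs K v (y j) :=
      one_le_prod_real fun v _ => one_le_sup_fin y i0 hy v
    have hA1 : (∏ w : InfinitePlace K, (⨆ j, w (y j)) ^ w.mult) = 1 := by nlinarith
    have hB1 : (∏ v ∈ hTfin.toFinset, ⨆ j, finAbs K v (y j)) = 1 := by nlinarith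
    refine ⟨fun w => ?_, fun v => ?_⟩
    · have := prod_eq_one_forall (fun w _ => hWm w) hA1 w (Finset.mem_univ w)
      exact pow_eq_one_imp (le_trans zero_le_one (one_le_sup_inf y i0 hy w))
        InfinitePlace.mult_ne_zero this
    · by_cases hv : v ∈ hTfin.toFinset
      · exact prod_eq_one_forall (fun v _ => one_le_sup_fin y i0 hy v) hB1 v hv
      · exact notMem_mulSupport.mp (by simpa using hv)
  · rintro ⟨h1, h2⟩
    unfold tupleHeight
    rw [hfp, Finset.prod_eq_one (fun w _ => by rw [h1 w, one_pow]),
      Finset.prod_eq_one (fun v _ => h2 v), one_mul]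

lemma one_le_tupleHeight (y : ι → K) (i0 : ι) (hy : y i0 = 1) :
    1 ≤ tupleHeight K y := by
  classical
  have hy0 : y i0 ≠ 0 := by rw [hy]; exact one_ne_zero
  have hTfin := mulSupport_sup_finite y i0 hy0
  have hfp : ∏ᶠ v : HeightOneSpectrum (𝓞 K), ⨆ j, finAbs K v (y j) =
      ∏ v ∈ hTfin.toFinset, ⨆ j, finAbs K v (y j) :=
    finprod_eq_prod_of_mulSupport_subset _ (by simp)
  unfold tupleHeight
  rw [hfp]
  have hA : 1 ≤ ∏ w : InfinitePlace K, (⨆ j, w (y j)) ^ w.mult :=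
    one_le_prod_real fun w _ => one_le_pow₀ (one_le_sup_inf y i0 hy w)
  have hB : 1 ≤ ∏ v ∈ hTfin.toFinset, ⨆ j, finAbs K v (y j) :=
    one_le_prod_real fun v _ => one_le_sup_fin y i0 hy v
  nlinarith

end sups

end KroneckerAux



/-- Kronecker's theorem: a point `P = [x_0 : ⋯ : x_n] ∈ ℙⁿ(K)` with `x_{i₀} ≠ 0` has
absolute height `H(P) = 1` if and only if every ratio `x_j / x_{i₀}` is zero or a root
of unity. -/
theorem kronecker (K : Type*) [Field K] [NumberField K] {n : ℕ}
    (x : Fin (n + 1) → K) (i₀ : Fin (n + 1)) (h : x i₀ ≠ 0) :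
    absTupleHeight K x = 1 ↔
      ∀ j, x j / x i₀ = 0 ∨ ∃ k : ℕ, 0 < k ∧ (x j / x i₀) ^ k = 1 := by
  classical
  set y : Fin (n + 1) → K := fun j => x j / x i₀ with hydef
  have hy1 : y i₀ = 1 := div_self h
  have hy0 : y i₀ ≠ 0 := by rw [hy1]; exact one_ne_zero
  have hfun : (fun j => x i₀ * y j) = x := funext fun j => by
    show x i₀ * (x j / x i₀) = x j
    rw [mul_comm, div_mul_cancel₀ _ h]
  have hH : tupleHeight K x = tupleHeight K y := by
    conv_lhs => rw [← hfun]
    exact KroneckerAux.tupleHeight_mul (x i₀) h y i₀ hy0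
  have h1le := KroneckerAux.one_le_tupleHeight y i₀ hy1
  have hd : (Module.finrank ℚ K : ℝ) ≠ 0 := by
    have : 0 < Module.finrank ℚ K := Module.finrank_pos
    positivity
  have key : absTupleHeight K x = 1 ↔ tupleHeight K y = 1 := by
    unfold absTupleHeight
    rw [hH]
    constructor
    · intro h1
      have h0 : (0:ℝ) ≤ tupleHeight K y := le_trans zero_le_one h1le
      have h2 := congrArg (fun t : ℝ => t ^ (Module.finrank ℚ K : ℝ)) h1
      rwa [← Real.rpow_mul h0, inv_mul_cancel₀ hd, Real.rpow_one, Real.one_rpow] at h2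
    · intro h1
      rw [h1, Real.one_rpow]
  rw [key, KroneckerAux.tupleHeight_eq_one_iff y i₀ hy1]
  constructor
  · rintro ⟨hinf, hfin⟩ j
    rcases eq_or_ne (x j / x i₀) 0 with hj | hj
    · exact Or.inl hj
    refine Or.inr ?_
    have hyj : y j ≠ 0 := hj
    have hval : ∀ v : IsDedekindDomain.HeightOneSpectrum (𝓞 K), v.valuation K (y j) ≤ 1 := by
      intro v
      rw [← KroneckerAux.finAbs_le_one_iff]
      calc finAbs K v (y j) ≤ ⨆ j', finAbs K v (y j') :=
            KroneckerAux.le_iSup' (fun j' => finAbs K v (y j')) j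
      _ = 1 := hfin v
    obtain ⟨z, hz⟩ := KroneckerAux.exists_int_of_valuation_le_one hval
    have hz0 : z ≠ 0 := by
      rintro rfl
      apply hyj
      rw [← hz]
      simp
    have hwle : ∀ w : InfinitePlace K, w (y j) ≤ 1 := fun w => by
      calc w (y j) ≤ ⨆ j', w (y j') := KroneckerAux.le_iSup' (fun j' => w (y j')) j
      _ = 1 := hinf w
    have hnorm : 1 ≤ ∏ w : InfinitePlace K, w (y j) ^ w.mult := by
      rw [InfinitePlace.prod_eq_abs_norm, ← hz,
        ← Algebra.coe_norm_int, ← Int.cast_one, ← Int.cast_abs, Rat.cast_intCast, Int.cast_le]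
      exact Int.one_le_abs (Algebra.norm_ne_zero_iff.mpr hz0)
    have hwone : ∀ w : InfinitePlace K, w (y j) = 1 := by
      intro w
      have := KroneckerAux.forall_eq_one_of_le_one
        (fun w _ => pow_nonneg (apply_nonneg _ _) _)
        (fun w _ => pow_le_one₀ (apply_nonneg _ _) (hwle w)) hnorm w (Finset.mem_univ w)
      exact KroneckerAux.pow_eq_one_imp (apply_nonneg _ _) InfinitePlace.mult_ne_zero this
    have hemb : ∀ φ : K →+* ℂ, ‖φ (y j)‖ = 1 := by
      intro φ
      rw [← InfinitePlace.apply φ]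
      exact hwone _
    have hint : IsIntegral ℤ (y j) := by
      rw [← hz]
      exact z.isIntegral_coe
    obtain ⟨k, hk, hk1⟩ := Embeddings.pow_eq_one_of_norm_eq_one K ℂ hint hemb
    exact ⟨k, hk, hk1⟩
  · intro hroots
    constructor
    · intro w
      refine KroneckerAux.iSup_eq_one_of (fun j' => w (y j')) i₀ (by show w (y i₀) = 1; rw [hy1, map_one])
        fun j' => ?_
      show w (y j') ≤ 1
      rcases hroots j' with hj | ⟨k, hk, hk1⟩
      · rw [show y j' = 0 from hj, map_zero]
        exact zero_le_one
      · have : w (y j') = 1 := KroneckerAux.pow_eq_one_imp (apply_nonneg _ _) hk.ne'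
          (by rw [← map_pow]; rw [show y j' ^ k = 1 from hk1, map_one])
        exact this.le
    · intro v
      refine KroneckerAux.iSup_eq_one_of (fun j' => finAbs K v (y j')) i₀
        (by show finAbs K v (y i₀) = 1; rw [hy1, KroneckerAux.finAbs_one]) fun j' => ?_
      show finAbs K v (y j') ≤ 1
      rcases hroots j' with hj | ⟨k, hk, hk1⟩
      · rw [show y j' = 0 from hj, KroneckerAux.finAbs_zero]
        exact zero_le_one
      · have : finAbs K v (y j') = 1 := KroneckerAux.pow_eq_one_imp
          (KroneckerAux.finAbs_nonneg v _) hk.ne'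
          (by rw [← KroneckerAux.finAbs_pow]; rw [show y j' ^ k = 1 from hk1,
            KroneckerAux.finAbs_one])
        exact this.le
end

section
/- Let f(x_0,...,x_n) and g(y_0,...,y_m) be nonzero polynomials over Q̄ in disjoint sets of variables. Then the projective height is multiplicative: H(f · g) = H(f) · H(g). -/
open NumberField IsDedekindDomain

/-- The Gauss norm of a (multivariable) polynomial at an infinite place `v`:
the maximum of `v` over its coefficients. -/
noncomputable def gaussInf (K : Type*) [Field K] [NumberField K] {sigma : Type*}
    (v : InfinitePlace K) (f : MvPolynomial sigma K) : ℝ :=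
  ⨆ m ∈ f.support, v (MvPolynomial.coeff m f)

/-- The Gauss norm of a (multivariable) polynomial at a finite place `v`:
the maximum of the normalized `v`-adic absolute value over its coefficients. -/
noncomputable def gaussFin (K : Type*) [Field K] [NumberField K] {sigma : Type*}
    (v : HeightOneSpectrum (𝓞 K)) (f : MvPolynomial sigma K) : ℝ :=
  ⨆ m ∈ f.support, finAbs K v (MvPolynomial.coeff m f)

/-- The projective multiplicative height `H_K(f)` of a polynomial: the product over all
places of the Gauss norms (with local-degree exponents at the infinite places). -/
noncomputable def polyHeight (K : Type*) [Field K] [NumberField K] {sigma : Type*}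
    (f : MvPolynomial sigma K) : ℝ :=
  (∏ v : InfinitePlace K, (gaussInf K v f) ^ v.mult) *
    ∏ᶠ v : HeightOneSpectrum (𝓞 K), gaussFin K v f

/-- The projective absolute multiplicative height `H(f) = H_K(f)^(1/[K:ℚ])` of a polynomial. -/
noncomputable def absPolyHeight (K : Type*) [Field K] [NumberField K] {sigma : Type*}
    (f : MvPolynomial sigma K) : ℝ :=
  polyHeight K f ^ ((Module.finrank ℚ K : ℝ)⁻¹)

/-- The affine multiplicative height `H^A_K(f)` of a polynomial: the product over all
places of `max {1, |f|_v^(n_v)}` where `|f|_v` is the Gauss norm. -/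
noncomputable def affPolyHeight (K : Type*) [Field K] [NumberField K] {sigma : Type*}
    (f : MvPolynomial sigma K) : ℝ :=
  (∏ v : InfinitePlace K, max 1 ((gaussInf K v f) ^ v.mult)) *
    ∏ᶠ v : HeightOneSpectrum (𝓞 K), max 1 (gaussFin K v f)

/-- The affine absolute height `H^A(f) = H^A_K(f)^(1/[K:ℚ])` of a polynomial. -/
noncomputable def absAffPolyHeight (K : Type*) [Field K] [NumberField K] {sigma : Type*}
    (f : MvPolynomial sigma K) : ℝ :=
  affPolyHeight K f ^ ((Module.finrank ℚ K : ℝ)⁻¹)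


set_option maxHeartbeats 1000000

section Aux

open Function MvPolynomial

variable {K : Type*} [Field K] [NumberField K]

lemma absNorm_pos' (v : HeightOneSpectrum (𝓞 K)) :
    (0 : ℝ) < (Ideal.absNorm v.asIdeal : ℝ) := by
  have h : v.asIdeal ∈ nonZeroDivisors (Ideal (𝓞 K)) :=
    mem_nonZeroDivisors_of_ne_zero v.ne_bot
  exact_mod_cast Ideal.absNorm_pos_iff_mem_nonZeroDivisors.mpr h

lemma finAbs_nonneg (v : HeightOneSpectrum (𝓞 K)) (x : K) : 0 ≤ finAbs K v x := by
  unfold finAbs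
  split_ifs
  · exact le_refl 0
  · exact le_of_lt (zpow_pos (absNorm_pos' v) _)

lemma finAbs_mul (v : HeightOneSpectrum (𝓞 K)) (x y : K) :
    finAbs K v (x * y) = finAbs K v x * finAbs K v y := by
  rcases eq_or_ne x 0 with rfl | hx
  · simp [finAbs]
  rcases eq_or_ne y 0 with rfl | hy
  · simp [finAbs]
  have hxy : x * y ≠ 0 := mul_ne_zero hx hy
  unfold finAbs
  rw [dif_neg hx, dif_neg hy, dif_neg hxy, ← zpow_add₀ (absNorm_pos' v).ne']
  congr 1
  rw [← toAdd_mul]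
  congr 1
  rw [← WithZero.coe_inj, WithZero.coe_mul, WithZero.coe_unzero, WithZero.coe_unzero,
    WithZero.coe_unzero, map_mul]

lemma finAbs_eq_one (v : HeightOneSpectrum (𝓞 K)) {x : K} (hx : x ≠ 0)
    (hv : v.valuation K x = 1) : finAbs K v x = 1 := by
  unfold finAbs
  rw [dif_neg hx]
  have h1 : WithZero.unzero ((Valuation.ne_zero_iff _).mpr hx : v.valuation K x ≠ 0) = 1 := by
    rw [← WithZero.coe_inj, WithZero.coe_unzero, hv, WithZero.coe_one]
  rw [h1]
  simp

lemma finite_intVal (a : 𝓞 K) (ha : a ≠ 0) :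
    {v : HeightOneSpectrum (𝓞 K) | v.intValuation a ≠ 1}.Finite := by
  have hspan : Ideal.span {a} ≠ (0 : Ideal (𝓞 K)) := by
    simpa [Ideal.span_singleton_eq_bot] using ha
  refine (Ideal.finite_factors hspan).subset fun v hv => ?_
  rw [Set.mem_setOf_eq] at hv ⊢
  rw [← v.intValuation_lt_one_iff_dvd]
  exact lt_of_le_of_ne (v.intValuation_le_one a) hv

lemma finite_val (x : K) (hx : x ≠ 0) :
    {v : HeightOneSpectrum (𝓞 K) | v.valuation K x ≠ 1}.Finite := by
  obtain ⟨a, b, hb, rfl⟩ := IsFractionRing.div_surjective (A := 𝓞 K) x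
  have hb0 : (b : 𝓞 K) ≠ 0 := nonZeroDivisors.coe_ne_zero ⟨b, hb⟩
  have ha0 : a ≠ 0 := by
    rintro rfl
    simp at hx
  refine ((finite_intVal a ha0).union (finite_intVal b hb0)).subset fun v hv => ?_
  simp only [Set.mem_setOf_eq, Set.mem_union] at hv ⊢
  by_contra hc
  push_neg at hc
  apply hv
  rw [map_div₀, HeightOneSpectrum.valuation_of_algebraMap,
    HeightOneSpectrum.valuation_of_algebraMap, hc.1, hc.2, div_one]

lemma mulSupport_finAbs {x : K} (hx : x ≠ 0) :
    (mulSupport fun v : HeightOneSpectrum (𝓞 K) => finAbs K v x).Finite :=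
  (finite_val x hx).subset fun v hv => by
    simp only [Set.mem_setOf_eq]
    intro h1
    exact hv (finAbs_eq_one v hx h1)

lemma biSup_finset_eq_sup' {α : Type*} {s : Finset α} (hs : s.Nonempty) {F : α → ℝ}
    (hF : ∀ m ∈ s, 0 ≤ F m) : (⨆ m ∈ s, F m) = s.sup' hs F := by
  obtain ⟨m₀, hm₀⟩ := hs
  have hsup : (0 : ℝ) ≤ s.sup' ⟨m₀, hm₀⟩ F := le_trans (hF m₀ hm₀) (Finset.le_sup' F hm₀)
  have hb : ∀ m : α, (⨆ _ : m ∈ s, F m) ≤ s.sup' ⟨m₀, hm₀⟩ F := by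
    intro m
    by_cases hm : m ∈ s
    · rw [ciSup_pos (f := fun _ : m ∈ s => F m) hm]
      exact Finset.le_sup' F hm
    · haveI : IsEmpty (m ∈ s) := ⟨hm⟩
      rw [Real.iSup_of_isEmpty]
      exact hsup
  refine le_antisymm (Real.iSup_le hb hsup) ?_
  have hbdd : BddAbove (Set.range fun m => ⨆ _ : m ∈ s, F m) :=
    ⟨s.sup' ⟨m₀, hm₀⟩ F, by rintro _ ⟨m, rfl⟩; exact hb m⟩
  refine Finset.sup'_le _ F fun m hm => ?_
  calc F m = ⨆ _ : m ∈ s, F m := (ciSup_pos (f := fun _ : m ∈ s => F m) hm).symm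
    _ ≤ _ := le_ciSup hbdd m

variable {sigma tau : Type*}

lemma mapDomain_sum_eq_iff (a a' : sigma →₀ ℕ) (b b' : tau →₀ ℕ) :
    a.mapDomain (Sum.inl : sigma → sigma ⊕ tau) + b.mapDomain Sum.inr =
      a'.mapDomain Sum.inl + b'.mapDomain Sum.inr ↔ a = a' ∧ b = b' := by
  constructor
  · intro h
    constructor
    · ext s
      have h2 := DFunLike.congr_fun h (Sum.inl s)
      simpa [Finsupp.add_apply, Finsupp.mapDomain_apply Sum.inl_injective,
        Finsupp.mapDomain_notin_range (f := (Sum.inr : tau → sigma ⊕ tau)) _ (Sum.inl s)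
          (by simp)] using h2
    · ext t
      have h2 := DFunLike.congr_fun h (Sum.inr t)
      simpa [Finsupp.add_apply, Finsupp.mapDomain_apply Sum.inr_injective,
        Finsupp.mapDomain_notin_range (f := (Sum.inl : sigma → sigma ⊕ tau)) _ (Sum.inr t)
          (by simp)] using h2
  · rintro ⟨rfl, rfl⟩
    rfl

lemma coeff_disjoint (f : MvPolynomial sigma K) (g : MvPolynomial tau K)
    (a : sigma →₀ ℕ) (b : tau →₀ ℕ) :
    MvPolynomial.coeff (a.mapDomain Sum.inl + b.mapDomain Sum.inr)
      ((rename (Sum.inl : sigma → sigma ⊕ tau) f) * (rename Sum.inr g)) =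
      MvPolynomial.coeff a f * MvPolynomial.coeff b g := by
  classical
  induction f using MvPolynomial.induction_on' with
  | add f1 f2 hf1 hf2 =>
    rw [map_add, add_mul, MvPolynomial.coeff_add, hf1, hf2, MvPolynomial.coeff_add, add_mul]
  | monomial u c =>
    induction g using MvPolynomial.induction_on' with
    | add g1 g2 hg1 hg2 =>
      rw [map_add, mul_add, MvPolynomial.coeff_add, hg1, hg2, MvPolynomial.coeff_add, mul_add]
    | monomial v d =>
      rw [rename_monomial, rename_monomial, MvPolynomial.monomial_mul,
        MvPolynomial.coeff_monomial, MvPolynomial.coeff_monomial,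
        MvPolynomial.coeff_monomial]
      rcases eq_or_ne u a with rfl | hu
      · rcases eq_or_ne v b with rfl | hv
        · rw [if_pos rfl, if_pos rfl, if_pos rfl]
        · rw [if_neg hv, mul_zero, if_neg]
          intro h
          exact hv ((mapDomain_sum_eq_iff _ _ _ _).mp h).2
      · rw [if_neg hu, zero_mul, if_neg]
        intro h
        exact hu ((mapDomain_sum_eq_iff _ _ _ _).mp h).1

lemma mem_support_disjoint (f : MvPolynomial sigma K) (g : MvPolynomial tau K)
    (p : (sigma ⊕ tau) →₀ ℕ) :
    p ∈ ((rename (Sum.inl : sigma → sigma ⊕ tau) f) * (rename Sum.inr g)).support ↔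
      ∃ a ∈ f.support, ∃ b ∈ g.support,
        a.mapDomain Sum.inl + b.mapDomain Sum.inr = p := by
  classical
  constructor
  · intro hp
    have hsub := MvPolynomial.support_mul (rename (Sum.inl : sigma → sigma ⊕ tau) f)
      (rename (Sum.inr : tau → sigma ⊕ tau) g) hp
    rw [Finset.mem_add] at hsub
    obtain ⟨c, hc, d, hd, rfl⟩ := hsub
    rw [support_rename_of_injective Sum.inl_injective, Finset.mem_image] at hc
    rw [support_rename_of_injective Sum.inr_injective, Finset.mem_image] at hd
    obtain ⟨a, ha, rfl⟩ := hc
    obtain ⟨b, hb, rfl⟩ := hd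
    exact ⟨a, ha, b, hb, rfl⟩
  · rintro ⟨a, ha, b, hb, rfl⟩
    rw [MvPolynomial.mem_support_iff, coeff_disjoint]
    exact mul_ne_zero (MvPolynomial.mem_support_iff.mp ha)
      (MvPolynomial.mem_support_iff.mp hb)

lemma gauss_mul (w : K → ℝ) (hmul : ∀ x y : K, w (x * y) = w x * w y)
    (h0 : ∀ x : K, 0 ≤ w x) (f : MvPolynomial sigma K) (g : MvPolynomial tau K)
    (hf : f ≠ 0) (hg : g ≠ 0) :
    (⨆ m ∈ ((rename (Sum.inl : sigma → sigma ⊕ tau) f) * (rename Sum.inr g)).support,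
        w (MvPolynomial.coeff m
          ((rename (Sum.inl : sigma → sigma ⊕ tau) f) * (rename Sum.inr g)))) =
      (⨆ m ∈ f.support, w (MvPolynomial.coeff m f)) *
        (⨆ m ∈ g.support, w (MvPolynomial.coeff m g)) := by
  classical
  have hF : rename (Sum.inl : sigma → sigma ⊕ tau) f ≠ 0 :=
    (map_ne_zero_iff _ (rename_injective _ Sum.inl_injective)).mpr hf
  have hG : rename (Sum.inr : tau → sigma ⊕ tau) g ≠ 0 :=
    (map_ne_zero_iff _ (rename_injective _ Sum.inr_injective)).mpr hg
  have hh : (rename (Sum.inl : sigma → sigma ⊕ tau) f) * (rename Sum.inr g) ≠ 0 :=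
    mul_ne_zero hF hG
  have hsf : f.support.Nonempty := MvPolynomial.support_nonempty.mpr hf
  have hsg : g.support.Nonempty := MvPolynomial.support_nonempty.mpr hg
  rw [biSup_finset_eq_sup' (MvPolynomial.support_nonempty.mpr hh) (fun m _ => h0 _),
    biSup_finset_eq_sup' hsf (fun m _ => h0 _), biSup_finset_eq_sup' hsg (fun m _ => h0 _)]
  obtain ⟨a, ha, hA⟩ := Finset.exists_mem_eq_sup' hsf (fun m => w (MvPolynomial.coeff m f))
  obtain ⟨b, hb, hB⟩ := Finset.exists_mem_eq_sup' hsg (fun m => w (MvPolynomial.coeff m g))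
  refine le_antisymm (Finset.sup'_le _ _ fun m hm => ?_) ?_
  · obtain ⟨a', ha', b', hb', rfl⟩ := (mem_support_disjoint f g m).mp hm
    rw [coeff_disjoint, hmul]
    refine mul_le_mul (Finset.le_sup' (fun m => w (MvPolynomial.coeff m f)) ha')
      (Finset.le_sup' (fun m => w (MvPolynomial.coeff m g)) hb') (h0 _) ?_
    exact le_trans (h0 (MvPolynomial.coeff a' f))
      (Finset.le_sup' (fun m => w (MvPolynomial.coeff m f)) ha')
  · rw [hA, hB, ← hmul, ← coeff_disjoint f g a b]
    exact Finset.le_sup' (fun m => w (MvPolynomial.coeff m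
      ((rename (Sum.inl : sigma → sigma ⊕ tau) f) * (rename Sum.inr g))))
      ((mem_support_disjoint f g _).mpr ⟨a, ha, b, hb, rfl⟩)

lemma gaussInf_mul (v : InfinitePlace K) (f : MvPolynomial sigma K) (g : MvPolynomial tau K)
    (hf : f ≠ 0) (hg : g ≠ 0) :
    gaussInf K v ((rename (Sum.inl : sigma → sigma ⊕ tau) f) * (rename Sum.inr g)) =
      gaussInf K v f * gaussInf K v g :=
  gauss_mul (fun x => v x) (fun x y => map_mul v x y) (fun x => AbsoluteValue.nonneg _ x)
    f g hf hg

lemma gaussFin_mul (v : HeightOneSpectrum (𝓞 K)) (f : MvPolynomial sigma K)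
    (g : MvPolynomial tau K) (hf : f ≠ 0) (hg : g ≠ 0) :
    gaussFin K v ((rename (Sum.inl : sigma → sigma ⊕ tau) f) * (rename Sum.inr g)) =
      gaussFin K v f * gaussFin K v g :=
  gauss_mul (finAbs K v) (finAbs_mul v) (finAbs_nonneg v) f g hf hg

lemma gaussInf_nonneg (v : InfinitePlace K) (f : MvPolynomial sigma K) :
    0 ≤ gaussInf K v f :=
  Real.iSup_nonneg fun _ => Real.iSup_nonneg fun _ => AbsoluteValue.nonneg _ _

lemma gaussFin_nonneg (v : HeightOneSpectrum (𝓞 K)) (f : MvPolynomial sigma K) :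
    0 ≤ gaussFin K v f :=
  Real.iSup_nonneg fun _ => Real.iSup_nonneg fun _ => finAbs_nonneg v _

lemma mulSupport_gaussFin (f : MvPolynomial sigma K) (hf : f ≠ 0) :
    (mulSupport fun v : HeightOneSpectrum (𝓞 K) => gaussFin K v f).Finite := by
  classical
  have hsub : (mulSupport fun v : HeightOneSpectrum (𝓞 K) => gaussFin K v f) ⊆
      ⋃ m ∈ f.support, mulSupport fun v : HeightOneSpectrum (𝓞 K) =>
        finAbs K v (MvPolynomial.coeff m f) := by
    intro v hv
    simp only [Set.mem_iUnion]
    by_contra hc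
    push_neg at hc
    apply hv
    have hone : ∀ m ∈ f.support, finAbs K v (MvPolynomial.coeff m f) = 1 := fun m hm =>
      not_not.mp fun hne => (hc m hm) hne
    show gaussFin K v f = 1
    unfold gaussFin
    rw [biSup_finset_eq_sup' (MvPolynomial.support_nonempty.mpr hf)
      (fun m _ => finAbs_nonneg v _)]
    rw [Finset.sup'_congr _ rfl hone]
    exact Finset.sup'_const _ 1
  exact (Set.Finite.biUnion f.support.finite_toSet fun m hm =>
    mulSupport_finAbs (MvPolynomial.mem_support_iff.mp hm)).subset hsub

lemma polyHeight_nonneg (f : MvPolynomial sigma K) : 0 ≤ polyHeight K f := by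
  unfold polyHeight
  exact mul_nonneg (Finset.prod_nonneg fun v _ => pow_nonneg (gaussInf_nonneg v f) _)
    (finprod_nonneg fun v => gaussFin_nonneg v f)

end Aux

/-- The projective height of polynomials is multiplicative for polynomials in disjoint
sets of variables: `H(f · g) = H(f) · H(g)`. -/
theorem absPolyHeight_mul_disjoint_vars (K : Type*) [Field K] [NumberField K]
    {sigma tau : Type*} (f : MvPolynomial sigma K) (g : MvPolynomial tau K)
    (hf : f ≠ 0) (hg : g ≠ 0) :
    absPolyHeight K
        ((MvPolynomial.rename (Sum.inl : sigma → sigma ⊕ tau) f) *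
          (MvPolynomial.rename (Sum.inr : tau → sigma ⊕ tau) g)) =
      absPolyHeight K f * absPolyHeight K g := by
  have hpoly : polyHeight K
      ((MvPolynomial.rename (Sum.inl : sigma → sigma ⊕ tau) f) *
        (MvPolynomial.rename (Sum.inr : tau → sigma ⊕ tau) g)) =
      polyHeight K f * polyHeight K g := by
    unfold polyHeight
    have h1 : (∏ v : InfinitePlace K, (gaussInf K v
        ((MvPolynomial.rename (Sum.inl : sigma → sigma ⊕ tau) f) *
          (MvPolynomial.rename (Sum.inr : tau → sigma ⊕ tau) g))) ^ v.mult) =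
        (∏ v : InfinitePlace K, (gaussInf K v f) ^ v.mult) *
        ∏ v : InfinitePlace K, (gaussInf K v g) ^ v.mult := by
      rw [← Finset.prod_mul_distrib]
      exact Finset.prod_congr rfl fun v _ => by rw [gaussInf_mul v f g hf hg, mul_pow]
    have h2 : (∏ᶠ v : HeightOneSpectrum (𝓞 K), gaussFin K v
        ((MvPolynomial.rename (Sum.inl : sigma → sigma ⊕ tau) f) *
          (MvPolynomial.rename (Sum.inr : tau → sigma ⊕ tau) g))) =
        (∏ᶠ v : HeightOneSpectrum (𝓞 K), gaussFin K v f) *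
        ∏ᶠ v : HeightOneSpectrum (𝓞 K), gaussFin K v g := by
      rw [← finprod_mul_distrib (mulSupport_gaussFin f hf) (mulSupport_gaussFin g hg)]
      exact finprod_congr fun v => gaussFin_mul v f g hf hg
    rw [h1, h2]
    ring
  unfold absPolyHeight
  rw [hpoly, Real.mul_rpow (polyHeight_nonneg f) (polyHeight_nonneg g)]
end
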